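/- The simple graph G on vertex set {1,2,3,4,5,6,7} with edge set {{1,2},{1,3},{1,5},{1,6},{1,7},{2,3},{2,4},{3,4},{4,5},{4,6},{4,7}} (graph number 801 in the Atlas of Graphs) has minimum rank 3 over the real numbers. -/

import Mathlib

/-- Edge list of graph number 801 in the Atlas of Graphs (vertices 1..7). -/
def atlas801Edges : List (ℕ × ℕ) := [(1,2),(1,3),(1,5),(1,6),(1,7),(2,3),(2,4),(3,4),(4,5),(4,6),(4,7)]

open Matrix

private def rsel : Fin 3 → Fin 7 := ![1, 0, 4]
private def csel : Fin 3 → Fin 7 := ![2, 0, 5]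
private def lbP : Matrix (Fin 3) (Fin 7) ℝ := Matrix.of fun i k => if k = rsel i then 1 else 0
private def lbQ : Matrix (Fin 7) (Fin 3) ℝ := Matrix.of fun l j => if l = csel j then 1 else 0

private lemma lb_submatrix (A : Matrix (Fin 7) (Fin 7) ℝ) :
    lbP * A * lbQ = A.submatrix rsel csel := by
  ext i j
  rw [Matrix.mul_apply]
  have h1 : lbP * A = A.submatrix rsel id := by
    ext i l
    rw [Matrix.mul_apply]
    simp [lbP, ite_mul]
  rw [h1]
  simp [lbQ, mul_ite]

/-- Any matrix with the atlas-801 pattern has rank at least 3. -/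
private lemma lb_rank (A : Matrix (Fin 7) (Fin 7) ℝ)
    (hpat : ∀ i j : Fin 7, i ≠ j →
      (A i j ≠ 0 ↔
        ((i.val + 1, j.val + 1) ∈ atlas801Edges ∨
         (j.val + 1, i.val + 1) ∈ atlas801Edges))) :
    3 ≤ A.rank := by
  have n1 : A 1 2 ≠ 0 := (hpat 1 2 (by decide)).mpr (by decide)
  have n2 : A 0 5 ≠ 0 := (hpat 0 5 (by decide)).mpr (by decide)
  have n3 : A 4 0 ≠ 0 := (hpat 4 0 (by decide)).mpr (by decide)
  have z1 : A 1 5 = 0 := by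
    by_contra h; exact absurd ((hpat 1 5 (by decide)).mp h) (by decide)
  have z2 : A 4 2 = 0 := by
    by_contra h; exact absurd ((hpat 4 2 (by decide)).mp h) (by decide)
  have z3 : A 4 5 = 0 := by
    by_contra h; exact absurd ((hpat 4 5 (by decide)).mp h) (by decide)
  have hdetval : (A.submatrix rsel csel).det = -(A 1 2 * A 0 5 * A 4 0) := by
    rw [Matrix.det_fin_three]
    simp [rsel, csel, z1, z2, z3]
  have hdet : (lbP * A * lbQ).det ≠ 0 := by
    rw [lb_submatrix, hdetval]
    simp only [neg_ne_zero]
    exact mul_ne_zero (mul_ne_zero n1 n2) n3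
  have hunit : IsUnit (lbP * A * lbQ) :=
    (Matrix.isUnit_iff_isUnit_det _).mpr (isUnit_iff_ne_zero.mpr hdet)
  have h3 : (lbP * A * lbQ).rank = 3 := by
    rw [Matrix.rank_of_isUnit _ hunit]; simp
  calc (3 : ℕ) = (lbP * A * lbQ).rank := h3.symm
    _ ≤ (lbP * A).rank := Matrix.rank_mul_le_left _ _
    _ ≤ A.rank := Matrix.rank_mul_le_right _ _

/-- A witness matrix with the atlas-801 pattern and rank 3. -/
private def atlasA : Matrix (Fin 7) (Fin 7) ℝ :=
  !![1,1,1,0,1,1,1;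
     1,1,-1,1,0,0,0;
     1,-1,1,-3,0,0,0;
     0,1,-3,3,-1,-1,-1;
     1,0,0,-1,0,0,0;
     1,0,0,-1,0,0,0;
     1,0,0,-1,0,0,0]

private def atlasU : Matrix (Fin 7) (Fin 3) ℝ :=
  !![1,0,0; 1,1,1; 1,-1,1; 0,2,1; 1,0,1; 1,0,1; 1,0,1]

private def atlasW : Matrix (Fin 3) (Fin 7) ℝ :=
  !![1,1,1,0,1,1,1; 0,1,-1,2,0,0,0; 0,-1,-1,-1,-1,-1,-1]

set_option maxHeartbeats 2000000 in
private lemma atlasA_fac : atlasA = atlasU * atlasW := by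
  ext i j
  rw [Matrix.mul_apply, Fin.sum_univ_three]
  fin_cases i <;> fin_cases j <;>
    norm_num [atlasA, atlasU, atlasW, Matrix.vecHead, Matrix.vecTail, Matrix.cons_val_two]

set_option maxHeartbeats 2000000 in
private lemma atlasA_symm : atlasA.IsSymm := by
  rw [Matrix.IsSymm]
  ext i j
  fin_cases i <;> fin_cases j <;>
    norm_num [atlasA, Matrix.vecHead, Matrix.vecTail]

set_option maxHeartbeats 2000000 in
private lemma atlasA_pat : ∀ i j : Fin 7, i ≠ j →
    (atlasA i j ≠ 0 ↔
      ((i.val + 1, j.val + 1) ∈ atlas801Edges ∨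
       (j.val + 1, i.val + 1) ∈ atlas801Edges)) := by
  intro i j hij
  fin_cases i <;> fin_cases j <;> first | (exact absurd rfl hij) |
    norm_num [atlasA, atlas801Edges, Matrix.vecHead, Matrix.vecTail]

private lemma atlasA_rank : atlasA.rank = 3 := by
  refine le_antisymm ?_ (lb_rank atlasA atlasA_pat)
  calc atlasA.rank = (atlasU * atlasW).rank := by rw [atlasA_fac]
    _ ≤ atlasU.rank := Matrix.rank_mul_le_left _ _
    _ ≤ Fintype.card (Fin 3) := Matrix.rank_le_card_width _
    _ = 3 := by simp

/-- Graph number 801 in the Atlas of Graphs has minimum rank 3 over the reals: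
3 is the least element of the set of ranks of real symmetric 7×7 matrices whose
off-diagonal zero/nonzero pattern matches the edges of the graph. -/
theorem atlas801_minRank_eq_three :
    IsLeast {r : ℕ | ∃ A : Matrix (Fin 7) (Fin 7) ℝ, A.IsSymm ∧
        (∀ i j : Fin 7, i ≠ j →
          (A i j ≠ 0 ↔
            ((i.val + 1, j.val + 1) ∈ atlas801Edges ∨
             (j.val + 1, i.val + 1) ∈ atlas801Edges))) ∧
        A.rank = r} 3 := by
  constructor
  · exact ⟨atlasA, atlasA_symm, atlasA_pat, atlasA_rank⟩
  · rintro r ⟨A, _, hpat, hr⟩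
    rw [← hr]
    exact lb_rank A hpat
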